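/- arXiv:1806.00540 — 2 statements merged into one kernel-verified Lean document; each statement's English description precedes it below -/
import Mathlib

section
/- Let T be a finite index set with positive real weights w, let n ≤ |T|, and let (t_0, ..., t_{n-1}) be a sequence of n distinct elements of T. Then the product of the sequential selection probabilities ∏_{i=0}^{n-1} P̂(t_i | [t_0,...,t_{i-1}]; T, n) equals (∏_{i=0}^{n-1} w_{t_i}) / (n! · e_n(T; w)). In particular the product is the same for every ordering of the same n-element subset. -/
/-- Weighted elementary symmetric sum: `e_m(S; w) = Σ_{T̂ ⊆ S, |T̂| = m} ∏_{j ∈ T̂} w_j`. -/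
noncomputable def esymm {ι : Type*} (S : Finset ι) (w : ι → ℝ) (m : ℕ) : ℝ :=
  ∑ T ∈ S.powersetCard m, ∏ j ∈ T, w j

/-- The sequential selection probability
`P̂(t | V; T, n) = w_t · e_{n-i-1}(T \ (V ∪ {t}); w) / ((n - i) · e_{n-i}(T \ V; w))`
where `i` is the number of already-selected elements recorded in the list `V`. -/
noncomputable def Phat {ι : Type*} [DecidableEq ι] (T : Finset ι) (w : ι → ℝ) (n : ℕ)
    (V : List ι) (t : ι) : ℝ :=
  w t * esymm (T \ insert t V.toFinset) w (n - V.length - 1) /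
    (((n - V.length : ℕ) : ℝ) * esymm (T \ V.toFinset) w (n - V.length))

lemma esymm_zero {ι : Type*} (S : Finset ι) (w : ι → ℝ) : esymm S w 0 = 1 := by
  simp [esymm]

lemma esymm_pos {ι : Type*} {S : Finset ι} {w : ι → ℝ} (hw : ∀ j ∈ S, 0 < w j) {m : ℕ}
    (h : m ≤ S.card) : 0 < esymm S w m := by
  refine Finset.sum_pos (fun t ht => ?_) (Finset.powersetCard_nonempty.mpr h)
  exact Finset.prod_pos fun j hj => hw j ((Finset.mem_powersetCard.mp ht).1 hj)

lemma prod_Phat_formula {ι : Type*} [DecidableEq ι] (T : Finset ι) (w : ι → ℝ)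
    (hw : ∀ j ∈ T, 0 < w j) (n : ℕ) (hn : n ≤ T.card)
    (L : List ι) (hnd : L.Nodup) (hmem : ∀ x ∈ L, x ∈ T) (hlen : L.length = n) :
    (∏ i : Fin L.length, Phat T w n (L.take i) (L.get i))
      = (L.map w).prod / (Nat.factorial n * esymm T w n) := by
  subst hlen
  set n := L.length with hnn
  have hE : (0:ℝ) < esymm T w n := esymm_pos hw hn
  have hfac : (0:ℝ) < (Nat.factorial n : ℝ) := by positivity
  rcases eq_or_ne L [] with rfl | hL
  · simp [esymm_zero]
  · set d := L.head hL with hd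
    have hsub : ∀ k, (L.take k).toFinset ⊆ T := by
      intro k x hx
      exact hmem x (List.mem_of_mem_take (List.mem_toFinset.mp hx))
    have hcardtake : ∀ k ≤ n, ((L.take k).toFinset).card = k := by
      intro k hk
      rw [List.toFinset_card_of_nodup (hnd.sublist (List.take_sublist k L))]
      simp [List.length_take]; omega
    have hcard : ∀ k ≤ n, (T \ (L.take k).toFinset).card = T.card - k := by
      intro k hk
      rw [Finset.card_sdiff_of_subset (hsub k), hcardtake k hk]
    have hwsub : ∀ k, ∀ j ∈ T \ (L.take k).toFinset, 0 < w j := by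
      intro k j hj
      exact hw j (Finset.mem_sdiff.mp hj).1
    have key : ∀ k, k ≤ n →
        (∏ i ∈ Finset.range k, Phat T w n (L.take i) (L.getD i d))
          = ((L.take k).map w).prod *
              ((Nat.factorial (n - k) : ℝ) * esymm (T \ (L.take k).toFinset) w (n - k)) /
            (Nat.factorial n * esymm T w n) := by
      intro k
      induction k with
      | zero =>
          intro _
          simp only [Finset.range_zero, Finset.prod_empty, List.take_zero, List.map_nil,
            List.prod_nil, Nat.sub_zero, List.toFinset_nil, Finset.sdiff_empty, one_mul]
          rw [div_self (by positivity)]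
      | succ k ih =>
          intro hk
          have hk' : k ≤ n := Nat.le_of_succ_le hk
          have hkL : k < L.length := by omega
          rw [Finset.prod_range_succ, ih hk']
          have hlentake : (L.take k).length = k := by
            simp [List.length_take]; omega
          have htake1 : L.take (k+1) = L.take k ++ [L[k]] := by
            rw [List.take_concat_get' L k hkL]
          have hgetD : L.getD k d = L[k] := List.getD_eq_getElem L d hkL
          have hins : insert (L.getD k d) (L.take k).toFinset = (L.take (k+1)).toFinset := by
            rw [hgetD, htake1, List.toFinset_append]
            ext x; simp [or_comm]
          have hmap : ((L.take (k+1)).map w).prod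
              = ((L.take k).map w).prod * w (L.getD k d) := by
            rw [htake1, hgetD, List.map_append, List.prod_append]
            simp
          set m := n - (k+1) with hm
          have hnk : n - k = m + 1 := by omega
          have hEk : (0:ℝ) < esymm (T \ (L.take k).toFinset) w (n - k) :=
            esymm_pos (hwsub k) (by rw [hcard k hk']; omega)
          unfold Phat
          rw [hlentake]
          have h2 : n - k - 1 = m := by omega
          rw [h2, hins, hnk, hmap]
          rw [hnk] at hEk
          have h1 : (Nat.factorial (m+1) : ℝ) = ((m:ℝ)+1) * Nat.factorial m := by
            rw [Nat.factorial_succ]; push_cast; ring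
          have hfm : (0:ℝ) < (Nat.factorial m : ℝ) := by positivity
          rw [h1]
          push_cast
          field_simp
    have hFin : (∏ i : Fin L.length, Phat T w n (L.take i) (L.get i))
        = ∏ i ∈ Finset.range n, Phat T w n (L.take i) (L.getD i d) := by
      rw [← Fin.prod_univ_eq_prod_range (fun i => Phat T w n (L.take i) (L.getD i d)) n]
      exact Finset.prod_congr rfl fun i _ => by
        rw [List.get_eq_getElem, List.getD_eq_getElem L d i.isLt]
    rw [hFin, key n le_rfl, hnn, List.take_length, Nat.sub_self, esymm_zero,
      Nat.factorial_zero]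
    simp [← hnn]

/-- For a finite index set `T` with positive weights, `n ≤ |T|`, and a sequence `L` of `n`
distinct elements of `T`, the product of the sequential selection probabilities
`∏_{i=0}^{n-1} P̂(t_i | [t_0,...,t_{i-1}]; T, n)` equals
`(∏_{i=0}^{n-1} w_{t_i}) / (n! · e_n(T; w))`.  In particular the product is the same
for every ordering of the same `n`-element subset. -/
theorem prod_Phat_eq {ι : Type*} [DecidableEq ι] (T : Finset ι) (w : ι → ℝ)
    (hw : ∀ j ∈ T, 0 < w j) (n : ℕ) (hn : n ≤ T.card)
    (L : List ι) (hnd : L.Nodup) (hmem : ∀ x ∈ L, x ∈ T) (hlen : L.length = n) :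
    (∏ i : Fin L.length, Phat T w n (L.take i) (L.get i))
        = (L.map w).prod / (Nat.factorial n * esymm T w n) ∧
      ∀ L' : List ι, L'.Nodup → L'.toFinset = L.toFinset →
        (∏ i : Fin L'.length, Phat T w n (L'.take i) (L'.get i))
          = (∏ i : Fin L.length, Phat T w n (L.take i) (L.get i)) := by
  refine ⟨prod_Phat_formula T w hw n hn L hnd hmem hlen, ?_⟩
  intro L' hnd' hfin
  have hlen' : L'.length = n := by
    rw [← List.toFinset_card_of_nodup hnd', hfin, List.toFinset_card_of_nodup hnd, hlen]
  have hmem' : ∀ x ∈ L', x ∈ T := fun x hx =>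
    hmem x (List.mem_toFinset.mp (hfin ▸ List.mem_toFinset.mpr hx))
  rw [prod_Phat_formula T w hw n hn L' hnd' hmem' hlen',
    prod_Phat_formula T w hw n hn L hnd hmem hlen]
  congr 1
  rw [← List.prod_toFinset w hnd', ← List.prod_toFinset w hnd, hfin]
end

section
/- Let T be a finite index set with positive real weights w, let n ≤ |T|, and let g be a real-valued function on the n-element subsets of T. Define P(T̂) = (∏_{j ∈ T̂} w_j) / e_n(T; w) for each n-element subset T̂ ⊆ T, and F(w) = Σ_{T̂ ⊆ T, |T̂| = n} P(T̂) · g(T̂). Then for each index i ∈ T, the partial derivative of F with respect to the single coordinate w_i (holding the other coordinates fixed) exists and equals Σ_{T̂ ⊆ T, |T̂| = n, i ∈ T̂} (1 / w_i) · P(T̂) · ( g(T̂) − F(w) ). (This is the policy-gradient expression for the multiple-state memory: the gradient of the expected return with respect to the weight w_i, when the memory contents M are distributed as P(M = S_{T̂}) = ∏_{j ∈ T̂} w_j / Σ_{T̃} ∏_{j ∈ T̃} w_j and g(T̂) is the expected return given memory contents S_{T̂}.) -/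
/-- Policy-gradient expression for the multiple-state memory.  With
`P(T̂) = (∏_{j ∈ T̂} w_j) / e_n(T; w)` on `n`-element subsets `T̂ ⊆ T` and
`F(w) = Σ_{T̂} P(T̂) · g(T̂)`, the partial derivative of `F` with respect to the single
coordinate `w_i` (holding the other coordinates fixed) exists and equals
`Σ_{T̂ ∋ i} (1 / w_i) · P(T̂) · (g(T̂) − F(w))`. -/
theorem hasDerivAt_subset_weighted_average {ι : Type*} [DecidableEq ι]
    (T : Finset ι) (w : ι → ℝ) (hw : ∀ j ∈ T, 0 < w j)
    (n : ℕ) (hn : n ≤ T.card) (g : Finset ι → ℝ) (i : ι) (hi : i ∈ T) :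
    HasDerivAt
      (fun x : ℝ => ∑ That ∈ T.powersetCard n,
        ((∏ j ∈ That, Function.update w i x j) / esymm T (Function.update w i x) n) * g That)
      (∑ That ∈ (T.powersetCard n).filter (fun That => i ∈ That),
        (1 / w i) * ((∏ j ∈ That, w j) / esymm T w n) *
          (g That - ∑ That' ∈ T.powersetCard n, ((∏ j ∈ That', w j) / esymm T w n) * g That'))
      (w i) := by
  classical
  have hwi : 0 < w i := hw i hi
  set pc := T.powersetCard n with hpc
  set A : ℝ := ∑ S ∈ pc.filter (fun S => i ∉ S), ∏ j ∈ S, w j with hA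
  set B : ℝ := ∑ S ∈ pc.filter (fun S => i ∈ S), ∏ j ∈ S.erase i, w j with hB
  set N0 : ℝ := ∑ S ∈ pc.filter (fun S => i ∉ S), (∏ j ∈ S, w j) * g S with hN0
  set N1 : ℝ := ∑ S ∈ pc.filter (fun S => i ∈ S), (∏ j ∈ S.erase i, w j) * g S with hN1
  have hprod : ∀ x : ℝ, ∀ S : Finset ι,
      ∏ j ∈ S, Function.update w i x j =
        if i ∈ S then x * ∏ j ∈ S.erase i, w j else ∏ j ∈ S, w j := by
    intro x S
    by_cases h : i ∈ S
    · rw [if_pos h, ← Finset.mul_prod_erase S _ h, Function.update_self]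
      congr 1
      exact Finset.prod_congr rfl fun j hj =>
        Function.update_of_ne (Finset.ne_of_mem_erase hj) _ _
    · rw [if_neg h]
      exact Finset.prod_congr rfl fun j hj =>
        Function.update_of_ne (by rintro rfl; exact h hj) _ _
  have hsum : ∀ x : ℝ, ∀ G : Finset ι → ℝ,
      (∑ S ∈ pc, (∏ j ∈ S, Function.update w i x j) * G S) =
        (∑ S ∈ pc.filter (fun S => i ∈ S), (∏ j ∈ S.erase i, w j) * G S) * x +
        (∑ S ∈ pc.filter (fun S => i ∉ S), (∏ j ∈ S, w j) * G S) := by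
    intro x G
    rw [← Finset.sum_filter_add_sum_filter_not pc (fun S => i ∈ S), Finset.sum_mul]
    congr 1
    · refine Finset.sum_congr rfl fun S hS => ?_
      simp only [Finset.mem_filter] at hS
      rw [hprod x S, if_pos hS.2]; ring
    · refine Finset.sum_congr rfl fun S hS => ?_
      simp only [Finset.mem_filter] at hS
      rw [hprod x S, if_neg hS.2]
  have hesymm : ∀ x : ℝ, esymm T (Function.update w i x) n = B * x + A := by
    intro x
    have := hsum x (fun _ => 1)
    simp only [mul_one] at this
    exact this
  have hfun : ∀ x : ℝ,
      (∑ That ∈ pc,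
        ((∏ j ∈ That, Function.update w i x j) / esymm T (Function.update w i x) n) * g That)
        = (N1 * x + N0) / (B * x + A) := by
    intro x
    rw [hesymm x, hN1, hN0, ← hsum x g, Finset.sum_div]
    exact Finset.sum_congr rfl fun S _ => div_mul_eq_mul_div _ _ _
  have hE : esymm T w n = B * w i + A := by
    have := hesymm (w i)
    rwa [Function.update_eq_self] at this
  have hEpos : 0 < esymm T w n := by
    rw [esymm]
    apply Finset.sum_pos
    · intro S hS
      rw [Finset.mem_powersetCard] at hS
      exact Finset.prod_pos fun j hj => hw j (hS.1 hj)
    · exact Finset.powersetCard_nonempty.mpr hn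
  have hEne : B * w i + A ≠ 0 := hE ▸ hEpos.ne'
  have hF : (∑ That' ∈ pc, ((∏ j ∈ That', w j) / esymm T w n) * g That')
      = (N1 * w i + N0) / (B * w i + A) := by
    have h := hfun (w i)
    rwa [Function.update_eq_self] at h
  have hD : HasDerivAt (fun x : ℝ => (N1 * x + N0) / (B * x + A))
      ((N1 * (B * w i + A) - (N1 * w i + N0) * B) / (B * w i + A) ^ 2) (w i) := by
    have h1 : HasDerivAt (fun x : ℝ => N1 * x + N0) N1 (w i) := by
      simpa using ((hasDerivAt_id (w i)).const_mul N1).add_const N0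
    have h2 : HasDerivAt (fun x : ℝ => B * x + A) B (w i) := by
      simpa using ((hasDerivAt_id (w i)).const_mul B).add_const A
    exact h1.div h2 hEne
  have hfun' : (fun x : ℝ => ∑ That ∈ pc,
        ((∏ j ∈ That, Function.update w i x j) / esymm T (Function.update w i x) n) * g That)
      = fun x : ℝ => (N1 * x + N0) / (B * x + A) := funext hfun
  rw [hfun']
  convert hD using 1
  rw [hF, hE]
  have hterm : ∀ S ∈ pc.filter (fun S => i ∈ S),
      (1 / w i) * ((∏ j ∈ S, w j) / (B * w i + A)) *
          (g S - (N1 * w i + N0) / (B * w i + A)) =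
        (1 / (B * w i + A) ^ 2) *
          ((∏ j ∈ S.erase i, w j) * g S * (B * w i + A) -
            (∏ j ∈ S.erase i, w j) * (N1 * w i + N0)) := by
    intro S hS
    simp only [Finset.mem_filter] at hS
    rw [← Finset.mul_prod_erase S w hS.2]
    have hEne := hEne
    generalize B * w i + A = D at hEne ⊢
    field_simp
  rw [Finset.sum_congr rfl hterm, ← Finset.mul_sum, Finset.sum_sub_distrib,
    ← Finset.sum_mul, ← Finset.sum_mul, ← hN1, ← hB]
  field_simp
end
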